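/- Suppose the family of intensity measures (ν_{x*} : x* ∈ X*) of M satisfies: whenever x*_n → x* in the unit sphere of X*, sup_{A∈A} sup_{0≤s≤t} |ν_{x*_n}((s,t]×A) − ν_{x*}((s,t]×A)| → 0 in probability for every t > 0. Then the family satisfies the sequential boundedness property: for any dense sequence (x*_n) in the unit sphere and any x* with ‖x*‖=1, almost surely ν_{x*}((s,t]×A) ≤ sup_n ν_{x*_n}((s,t]×A) for all 0 ≤ s < t and A ∈ A. -/

import Mathlib

open MeasureTheory Set Function Filter
open scoped ENNReal NNReal Topology

/-- If the family of intensity measures `(ν x* : x* ∈ X*)` of a cylindrical orthogonal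
martingale-valued measure satisfies: whenever `x*ₙ → x*` in the unit sphere of `X*`,
`sup_{A ∈ R} sup_{0 ≤ s ≤ t} |ν_{x*ₙ}((s,t] × A) − ν_{x*}((s,t] × A)| → 0` in probability
for every `t > 0` (the absolute difference in `[0,∞]` being `(a − b) + (b − a)`), then the
family satisfies the sequential boundedness property: for any dense sequence `(x*ₙ)` in
the unit sphere and any `x*` with `‖x*‖ = 1` and `t > 0`, almost surely
`ν_{x*}((s,t] × A) ≤ sup_n ν_{x*ₙ}((s,t] × A)` for all `0 ≤ s < t` and `A ∈ R`. -/
theorem stmt15 {X : Type*} [NormedAddCommGroup X] [NormedSpace ℝ X]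
    {U Ω : Type*} [MeasurableSpace U] [MeasurableSpace Ω]
    (P : Measure Ω) [IsProbabilityMeasure P] (R : Set (Set U))
    (ν : StrongDual ℝ X → Ω → Measure (ℝ≥0 × U))
    (hconv : ∀ (x : StrongDual ℝ X) (xn : ℕ → StrongDual ℝ X),
      ‖x‖ = 1 → (∀ n, ‖xn n‖ = 1) → Tendsto xn atTop (𝓝 x) →
      ∀ t : ℝ≥0, 0 < t → ∀ ε : ℝ≥0∞, 0 < ε →
        Tendsto (fun n => P {ω | ε ≤
            ⨆ (A : Set U) (_ : A ∈ R) (s : ℝ≥0) (_ : s ≤ t),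
              ((ν (xn n) ω (Ioc s t ×ˢ A) - ν x ω (Ioc s t ×ˢ A)) +
                (ν x ω (Ioc s t ×ˢ A) - ν (xn n) ω (Ioc s t ×ˢ A)))})
          atTop (𝓝 0)) :
    ∀ (xn : ℕ → StrongDual ℝ X), (∀ n, ‖xn n‖ = 1) →
      {y : StrongDual ℝ X | ‖y‖ = 1} ⊆ closure (Set.range xn) →
      ∀ x : StrongDual ℝ X, ‖x‖ = 1 → ∀ t : ℝ≥0, 0 < t →
        ∀ᵐ ω ∂P, ∀ s : ℝ≥0, s < t → ∀ A ∈ R,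
          ν x ω (Ioc s t ×ˢ A) ≤ ⨆ n, ν (xn n) ω (Ioc s t ×ˢ A) := by

  intro xn hxn hdense x hx t ht
  have hxcl : x ∈ closure (Set.range xn) := hdense hx
  rw [mem_closure_iff_seq_limit] at hxcl
  obtain ⟨y, hyr, hyt⟩ := hxcl
  choose idx hidx using hyr
  have hy1 : ∀ n, ‖y n‖ = 1 := fun n => (hidx n) ▸ hxn (idx n)
  set D : ℕ → Ω → ℝ≥0∞ := fun n ω =>
    ⨆ (A : Set U) (_ : A ∈ R) (s : ℝ≥0) (_ : s ≤ t),
      ((ν (y n) ω (Ioc s t ×ˢ A) - ν x ω (Ioc s t ×ˢ A)) +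
        (ν x ω (Ioc s t ×ˢ A) - ν (y n) ω (Ioc s t ×ˢ A))) with hDdef
  have hconv' := hconv x y hx hy1 hyt t ht
  have hsel : ∀ k : ℕ, ∃ m, P {ω | ((k : ℝ≥0∞) + 1)⁻¹ ≤ D m ω} ≤ 2⁻¹ ^ k := by
    intro k
    have hεk : (0 : ℝ≥0∞) < ((k : ℝ≥0∞) + 1)⁻¹ := by
      simp [ENNReal.inv_pos]
    have hδ : (0 : ℝ≥0∞) < 2⁻¹ ^ k := ENNReal.pow_pos (by norm_num) k
    have := (hconv' _ hεk).eventually (gt_mem_nhds hδ)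
    obtain ⟨m, hm⟩ := this.exists
    exact ⟨m, hm.le⟩
  choose nk hnk using hsel
  set S : ℕ → Set Ω := fun k => {ω | ((k : ℝ≥0∞) + 1)⁻¹ ≤ D (nk k) ω} with hSdef
  have hsum : ∑' k, P (S k) ≠ ∞ := by
    refine ne_top_of_le_ne_top ?_ (ENNReal.tsum_le_tsum hnk)
    simp [ENNReal.tsum_geometric]
  have hae : ∀ᵐ ω ∂P, ∀ᶠ k in atTop, ω ∉ S k :=
    MeasureTheory.ae_eventually_notMem hsum
  filter_upwards [hae] with ω hω s hs A hA
  obtain ⟨K, hK⟩ := hω.exists_forall_of_atTop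
  refine ENNReal.le_of_forall_pos_le_add fun ε hε _ => ?_
  obtain ⟨n₀, hn₀⟩ := ENNReal.exists_inv_nat_lt (by exact_mod_cast hε.ne' : (ε : ℝ≥0∞) ≠ 0)
  set k := max n₀ K with hk
  have hDk : D (nk k) ω < ((k : ℝ≥0∞) + 1)⁻¹ := lt_of_not_ge (hK k (le_max_right _ _))
  have hεk : ((k : ℝ≥0∞) + 1)⁻¹ ≤ (ε : ℝ≥0∞) := by
    refine le_trans ?_ hn₀.le
    apply ENNReal.inv_le_inv.mpr
    exact_mod_cast le_trans (Nat.cast_le.mpr (le_max_left n₀ K)) (by simp; constructor <;> omega)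
  set E := Ioc s t ×ˢ A
  have h1 : ν x ω E ≤ (ν x ω E - ν (y (nk k)) ω E) + ν (y (nk k)) ω E := le_tsub_add
  have h2 : ν x ω E - ν (y (nk k)) ω E ≤ D (nk k) ω := by
    have hstep : ν x ω E - ν (y (nk k)) ω E ≤
        (ν (y (nk k)) ω E - ν x ω E) + (ν x ω E - ν (y (nk k)) ω E) := le_add_self
    exact hstep.trans (le_iSup₂_of_le A hA (le_iSup₂_of_le s hs.le le_rfl))
  have h3 : ν (y (nk k)) ω E ≤ ⨆ n, ν (xn n) ω E := by
    rw [← hidx (nk k)]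
    exact le_iSup (fun n => ν (xn n) ω E) (idx (nk k))
  calc ν x ω E ≤ (ν x ω E - ν (y (nk k)) ω E) + ν (y (nk k)) ω E := h1
    _ ≤ D (nk k) ω + ⨆ n, ν (xn n) ω E := add_le_add h2 h3
    _ ≤ (ε : ℝ≥0∞) + ⨆ n, ν (xn n) ω E := add_le_add (hDk.le.trans hεk) le_rfl
    _ = (⨆ n, ν (xn n) ω E) + ε := add_comm _ _
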